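/- Lemma 8 for the class of line graphs (host-graph form): For all positive integers i and j, every simple undirected graph H with at least i·j edges contains either a set of i edges that pairwise share an endpoint (equivalently, a clique of size i in the line graph of H) or a matching of size j (j pairwise disjoint edges, equivalently an independent set of size j in the line graph of H). In other words, the Ramsey number of the class of line graphs satisfies R_L(i, j) ≤ i·j. -/

import Mathlib

set_option linter.unusedSectionVars false
set_option maxHeartbeats 1000000

namespace LGR
open Finset

open Finset

variable {V : Type*} [Fintype V] [DecidableEq V]

/-- Two edges (as `Sym2`) are vertex-disjoint. -/
def Disj (e f : Sym2 V) : Prop := ∀ x : V, ¬(x ∈ e ∧ x ∈ f)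

instance (e f : Sym2 V) : Decidable (Disj e f) := by unfold Disj; infer_instance

/-- `M` is a matching: all edges non-diagonal and pairwise vertex-disjoint. -/
def IsMat (M : Finset (Sym2 V)) : Prop :=
  (∀ e ∈ M, ¬ e.IsDiag) ∧ ∀ e ∈ M, ∀ f ∈ M, e ≠ f → Disj e f

instance (M : Finset (Sym2 V)) : Decidable (IsMat M) := by unfold IsMat; infer_instance

/-- `x` is covered by edge set `M`. -/
def covered (M : Finset (Sym2 V)) (x : V) : Prop := ∃ e ∈ M, x ∈ e

instance (M : Finset (Sym2 V)) (x : V) : Decidable (covered M x) := by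
  unfold covered; infer_instance

lemma covered_mono {M M' : Finset (Sym2 V)} (h : M ⊆ M') {x : V} (hx : covered M x) :
    covered M' x := by obtain ⟨e, he, hxe⟩ := hx; exact ⟨e, h he, hxe⟩

lemma IsMat.subset {M M' : Finset (Sym2 V)} (h : M' ⊆ M) (hM : IsMat M) : IsMat M' :=
  ⟨fun e he => hM.1 e (h he), fun e he f hf hef => hM.2 e (h he) f (h hf) hef⟩

lemma IsMat.eq_of_mem {M : Finset (Sym2 V)} (hM : IsMat M) {e f : Sym2 V} {x : V}
    (he : e ∈ M) (hf : f ∈ M) (hxe : x ∈ e) (hxf : x ∈ f) : e = f := by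
  by_contra hne
  exact hM.2 e he f hf hne x ⟨hxe, hxf⟩

/-- degree of a vertex in an edge set -/
def deg (E : Finset (Sym2 V)) (x : V) : ℕ := (E.filter (fun e => x ∈ e)).card

lemma deg_mono {E E' : Finset (Sym2 V)} (h : E ⊆ E') (x : V) : deg E x ≤ deg E' x :=
  card_le_card (filter_subset_filter _ h)

/-- support (covered vertices) as a finset -/
def supp (E : Finset (Sym2 V)) : Finset V := univ.filter (fun x => covered E x)

lemma mem_supp {E : Finset (Sym2 V)} {x : V} : x ∈ supp E ↔ covered E x := by
  simp [supp]

lemma mem_supp_of_mem {E : Finset (Sym2 V)} {e : Sym2 V} {x : V} (he : e ∈ E) (hx : x ∈ e) :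
    x ∈ supp E := mem_supp.mpr ⟨e, he, hx⟩

lemma supp_mono {E E' : Finset (Sym2 V)} (h : E ⊆ E') : supp E ⊆ supp E' := by
  intro x hx; exact mem_supp.mpr (covered_mono h (mem_supp.mp hx))

/-- the set of sub-matchings of `E` -/
def matchings (E : Finset (Sym2 V)) : Finset (Finset (Sym2 V)) :=
  E.powerset.filter IsMat

/-- matching number -/
def nu (E : Finset (Sym2 V)) : ℕ := (matchings E).sup card

lemma empty_mem_matchings (E : Finset (Sym2 V)) : ∅ ∈ matchings E := by
  simp [matchings, IsMat]

lemma card_le_nu {E M : Finset (Sym2 V)} (hME : M ⊆ E) (hM : IsMat M) : M.card ≤ nu E :=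
  le_sup (by simp [matchings, hME, hM])

lemma exists_max_matching (E : Finset (Sym2 V)) :
    ∃ M, M ⊆ E ∧ IsMat M ∧ M.card = nu E := by
  obtain ⟨M, hM, hc⟩ := Finset.exists_mem_eq_sup (matchings E) ⟨∅, empty_mem_matchings E⟩ card
  simp only [matchings, mem_filter, mem_powerset] at hM
  exact ⟨M, hM.1, hM.2, hc.symm⟩

lemma nu_mono {E E' : Finset (Sym2 V)} (h : E ⊆ E') : nu E ≤ nu E' := by
  obtain ⟨M, hME, hM, hc⟩ := exists_max_matching E
  exact hc ▸ card_le_nu (hME.trans h) hM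

/-- coverage after erasing one edge of a matching -/
lemma covered_erase {M : Finset (Sym2 V)} (hM : IsMat M) {e : Sym2 V} (he : e ∈ M) (t : V) :
    covered (M.erase e) t ↔ covered M t ∧ t ∉ e := by
  constructor
  · rintro ⟨g, hg, htg⟩
    have hgM := mem_of_mem_erase hg
    refine ⟨⟨g, hgM, htg⟩, fun hte => ?_⟩
    exact (ne_of_mem_erase hg) (hM.eq_of_mem hgM he htg hte)
  · rintro ⟨⟨g, hg, htg⟩, hte⟩
    refine ⟨g, mem_erase.mpr ⟨fun hge => hte (hge ▸ htg), hg⟩, htg⟩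

lemma isMat_insert {M : Finset (Sym2 V)} (hM : IsMat M) {e : Sym2 V} (hnd : ¬ e.IsDiag)
    (h : ∀ x ∈ e, ¬ covered M x) : IsMat (insert e M) := by
  constructor
  · intro f hf
    rcases mem_insert.mp hf with rfl | hf
    · exact hnd
    · exact hM.1 f hf
  · intro f hf g hg hfg x hx
    rcases mem_insert.mp hf with rfl | hf'
    · rcases mem_insert.mp hg with rfl | hg'
      · exact (hfg rfl).elim
      · exact h x hx.1 ⟨g, hg', hx.2⟩
    · rcases mem_insert.mp hg with rfl | hg'
      · exact h x hx.2 ⟨f, hf', hx.1⟩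
      · exact hM.2 f hf' g hg' hfg x hx

lemma not_mem_of_uncovered {M : Finset (Sym2 V)} {e : Sym2 V} {x : V} (hx : x ∈ e)
    (h : ¬ covered M x) : e ∉ M := fun he => h ⟨e, he, hx⟩


lemma covered_insert {M : Finset (Sym2 V)} {e : Sym2 V} (t : V) :
    covered (insert e M) t ↔ t ∈ e ∨ covered M t := by
  constructor
  · rintro ⟨g, hg, htg⟩
    rcases mem_insert.mp hg with rfl | hg'
    · exact Or.inl htg
    · exact Or.inr ⟨g, hg', htg⟩
  · rintro (h | ⟨g, hg, htg⟩)
    · exact ⟨e, mem_insert_self e M, h⟩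
    · exact ⟨g, mem_insert_of_mem hg, htg⟩

theorem exchange (M N : Finset (Sym2 V)) (w : V) (hM : IsMat M) (hN : IsMat N)
    (hMw : covered M w) (hNw : ¬ covered N w) :
    (∃ N', IsMat N' ∧ N' ⊆ M ∪ N ∧ N'.card = N.card + 1) ∨
    (∃ M' z, IsMat M' ∧ M' ⊆ M ∪ N ∧ M'.card = M.card ∧ covered N z ∧
      (∀ t, covered M' t ↔ (covered M t ∧ t ≠ w) ∨ t = z)) := by
  obtain ⟨e, heM, hwe⟩ := hMw
  obtain ⟨x, hex⟩ := Sym2.mem_iff_exists.mp hwe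
  have hwx : w ≠ x := by
    have := hM.1 e heM
    rw [hex, Sym2.mk_isDiag_iff] at this
    exact this
  have hxe : x ∈ e := by rw [hex]; simp
  have hcMw : covered M w := ⟨e, heM, hwe⟩
  have hcMx : covered M x := ⟨e, heM, hxe⟩
  by_cases hNx : covered N x
  · -- x is N-covered via f = s(x,y)
    obtain ⟨f, hfN, hxf⟩ := hNx
    obtain ⟨y, hfy⟩ := Sym2.mem_iff_exists.mp hxf
    have hxy : x ≠ y := by
      have := hN.1 f hfN
      rw [hfy, Sym2.mk_isDiag_iff] at this
      exact this
    have hyf : y ∈ f := by rw [hfy]; simp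
    have hyw : y ≠ w := by
      rintro rfl
      exact hNw ⟨f, hfN, hyf⟩
    have hfe : f ≠ e := by
      rintro rfl
      exact hNw ⟨f, hfN, hwe⟩
    have hywx : y ∉ e := by
      rw [hex, Sym2.mem_iff]
      push_neg
      exact ⟨hyw, fun h => hxy h.symm⟩
    by_cases hMy : covered M y
    · -- B2 : recurse
      obtain ⟨g, hgM, hyg⟩ := hMy
      have hge : g ≠ e := by
        rintro rfl
        exact hywx hyg
      have hMey : covered (M.erase e) y := ⟨g, mem_erase.mpr ⟨hge, hgM⟩, hyg⟩
      have hNfy : ¬ covered (N.erase f) y := by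
        rw [covered_erase hN hfN]
        rintro ⟨-, h⟩
        exact h hyf
    -- no edge of the reduced union touches w or x
      have hfree : ∀ g' ∈ (M.erase e) ∪ (N.erase f), w ∉ g' ∧ x ∉ g' := by
        intro g' hg'
        rcases mem_union.mp hg' with hg' | hg'
        · have hg'M := mem_of_mem_erase hg'
          have hne := ne_of_mem_erase hg'
          constructor
          · intro hwg'
            exact hne (hM.eq_of_mem hg'M heM hwg' hwe)
          · intro hxg'
            exact hne (hM.eq_of_mem hg'M heM hxg' hxe)
        · have hg'N := mem_of_mem_erase hg'
          have hne := ne_of_mem_erase hg'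
          constructor
          · intro hwg'
            exact hNw ⟨g', hg'N, hwg'⟩
          · intro hxg'
            exact hne (hN.eq_of_mem hg'N hfN hxg' hxf)
      have IH := exchange (M.erase e) (N.erase f) y (hM.subset (erase_subset e M))
        (hN.subset (erase_subset f N)) hMey hNfy
      have hsub2 : (M.erase e) ∪ (N.erase f) ⊆ M ∪ N :=
        union_subset_union (erase_subset e M) (erase_subset f N)
      rcases IH with ⟨N', hN'mat, hN'sub, hN'card⟩ | ⟨M₁, z, hM₁mat, hM₁sub, hM₁card, hNz, hcov⟩
      · -- lift disjunct 1 : add e back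
        left
        have hwN' : ¬ covered N' w := by
          rintro ⟨g', hg', hwg'⟩
          exact (hfree g' (hN'sub hg')).1 hwg'
        have hxN' : ¬ covered N' x := by
          rintro ⟨g', hg', hxg'⟩
          exact (hfree g' (hN'sub hg')).2 hxg'
        refine ⟨insert e N', isMat_insert hN'mat (hM.1 e heM) ?_, ?_, ?_⟩
        · intro t ht
          rw [hex, Sym2.mem_iff] at ht
          rcases ht with rfl | rfl
          · exact hwN'
          · exact hxN'
        · exact insert_subset (mem_union_left N heM) (hN'sub.trans hsub2)
        · rw [card_insert_of_notMem (not_mem_of_uncovered hwe hwN'),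
            hN'card, card_erase_of_mem hfN]
          have : 0 < N.card := card_pos.mpr ⟨f, hfN⟩
          omega
      · -- lift disjunct 2 : add f back
        right
        have hzNf : covered N z ∧ z ∉ f := (covered_erase hN hfN z).mp hNz
        have hzx : z ≠ x := fun h => hzNf.2 (h ▸ hxf)
        have hzy : z ≠ y := fun h => hzNf.2 (h ▸ hyf)
        have hyM₁ : ¬ covered M₁ y := by
          rw [hcov y]
          rintro (⟨-, h⟩ | h)
          · exact h rfl
          · exact hzy h.symm
        have hxM₁ : ¬ covered M₁ x := by
          rw [hcov x]
          rintro (⟨h, -⟩ | h)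
          · exact ((covered_erase hM heM x).mp h).2 hxe
          · exact hzx h.symm
        refine ⟨insert f M₁, z, isMat_insert hM₁mat (hN.1 f hfN) ?_, ?_, ?_, hzNf.1, ?_⟩
        · intro t ht
          rw [hfy, Sym2.mem_iff] at ht
          rcases ht with rfl | rfl
          · exact hxM₁
          · exact hyM₁
        · exact insert_subset (mem_union_right M hfN) (hM₁sub.trans hsub2)
        · rw [card_insert_of_notMem (not_mem_of_uncovered hyf hyM₁),
            hM₁card, card_erase_of_mem heM]
          have : 0 < M.card := card_pos.mpr ⟨e, heM⟩
          omega
        · intro t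
          rw [covered_insert, hcov t, covered_erase hM heM]
          have hcMy : covered M y := ⟨g, hgM, hyg⟩
          have hzw : z ≠ w := by
            rintro rfl
            exact hNw hzNf.1
          constructor
          · rintro (htf | ⟨⟨hMt, hte⟩, hty⟩ | rfl)
            · rw [hfy, Sym2.mem_iff] at htf
              rcases htf with rfl | rfl
              · exact Or.inl ⟨hcMx, Ne.symm hwx⟩
              · exact Or.inl ⟨hcMy, hyw⟩
            · refine Or.inl ⟨hMt, fun htw => hte ?_⟩
              rw [htw, hex]
              simp
            · exact Or.inr rfl
          · rintro (⟨hMt, htw⟩ | rfl)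
            · by_cases htx : t = x
              · left; rw [hfy, Sym2.mem_iff]; exact Or.inl htx
              · by_cases hty : t = y
                · left; rw [hfy, Sym2.mem_iff]; exact Or.inr hty
                · refine Or.inr (Or.inl ⟨⟨hMt, ?_⟩, hty⟩)
                  rw [hex, Sym2.mem_iff]
                  push_neg
                  exact ⟨htw, htx⟩
            · exact Or.inr (Or.inr rfl)
    · -- B1 : y is M-free, swap e for f
      right
      have hxMe : ¬ covered (M.erase e) x := by
        rw [covered_erase hM heM]
        rintro ⟨-, h⟩
        exact h hxe
      have hyMe : ¬ covered (M.erase e) y := by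
        rw [covered_erase hM heM]
        rintro ⟨h, -⟩
        exact hMy h
      refine ⟨insert f (M.erase e), y, isMat_insert (hM.subset (erase_subset e M))
        (hN.1 f hfN) ?_, ?_, ?_, ⟨f, hfN, hyf⟩, ?_⟩
      · intro t ht
        rw [hfy, Sym2.mem_iff] at ht
        rcases ht with rfl | rfl
        · exact hxMe
        · exact hyMe
      · refine insert_subset (mem_union_right M hfN) ?_
        exact (erase_subset e M).trans subset_union_left
      · rw [card_insert_of_notMem (not_mem_of_uncovered hyf hyMe), card_erase_of_mem heM]
        have : 0 < M.card := card_pos.mpr ⟨e, heM⟩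
        omega
      · intro t
        rw [covered_insert, covered_erase hM heM]
        constructor
        · rintro (htf | ⟨hMt, hte⟩)
          · rw [hfy, Sym2.mem_iff] at htf
            rcases htf with rfl | rfl
            · exact Or.inl ⟨hcMx, Ne.symm hwx⟩
            · exact Or.inr rfl
          · refine Or.inl ⟨hMt, fun htw => hte ?_⟩
            rw [htw, hex]
            simp
        · rintro (⟨hMt, htw⟩ | rfl)
          · by_cases htx : t = x
            · left; rw [hfy, Sym2.mem_iff]; exact Or.inl htx
            · refine Or.inr ⟨hMt, ?_⟩
              rw [hex, Sym2.mem_iff]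
              push_neg
              exact ⟨htw, htx⟩
          · left; rw [hfy, Sym2.mem_iff]; exact Or.inr rfl
  · -- Case A : augment N with e
    left
    refine ⟨insert e N, isMat_insert hN (hM.1 e heM) ?_, ?_, ?_⟩
    · intro t ht
      rw [hex, Sym2.mem_iff] at ht
      rcases ht with rfl | rfl
      · exact hNw
      · exact hNx
    · exact insert_subset (mem_union_left N heM) subset_union_right
    · exact card_insert_of_notMem (not_mem_of_uncovered hwe hNw)
termination_by N.card
decreasing_by exact card_erase_lt_of_mem hfN

lemma card_filter_mem {e : Sym2 V} (hnd : ¬ e.IsDiag) :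
    (univ.filter (fun x : V => x ∈ e)).card = 2 := by
  induction e with
  | _ a b =>
    rw [Sym2.mk_isDiag_iff] at hnd
    have : (univ.filter (fun x : V => x ∈ s(a, b))) = {a, b} := by
      ext x
      simp [Sym2.mem_iff]
    rw [this, card_pair hnd]

lemma handshake {E : Finset (Sym2 V)} (hnd : ∀ e ∈ E, ¬ e.IsDiag) :
    ∑ x ∈ univ, deg E x = 2 * E.card := by
  unfold deg
  have h1 : ∀ x : V, (E.filter (fun e => x ∈ e)).card = ∑ e ∈ E, if x ∈ e then 1 else 0 :=
    fun x => Finset.card_filter _ _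
  simp_rw [h1]
  rw [Finset.sum_comm]
  have h2 : ∀ e ∈ E, (∑ x ∈ univ, if x ∈ e then 1 else 0) = 2 := by
    intro e he
    rw [← Finset.card_filter]
    exact card_filter_mem (hnd e he)
  rw [Finset.sum_congr rfl h2, Finset.sum_const, smul_eq_mul, mul_comm]

lemma deg_eq_zero {E : Finset (Sym2 V)} {x : V} (hx : x ∉ supp E) : deg E x = 0 := by
  rw [mem_supp] at hx
  unfold deg
  rw [card_eq_zero, filter_eq_empty_iff]
  intro e he hxe
  exact hx ⟨e, he, hxe⟩

lemma handshake_supp {E : Finset (Sym2 V)} (hnd : ∀ e ∈ E, ¬ e.IsDiag) :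
    ∑ x ∈ supp E, deg E x = 2 * E.card := by
  rw [← handshake hnd]
  exact Finset.sum_subset (subset_univ (supp E)) (fun x _ hx => deg_eq_zero hx)

lemma deg_le_supp {E : Finset (Sym2 V)} (hnd : ∀ e ∈ E, ¬ e.IsDiag) (x : V) :
    deg E x ≤ (supp E).card - 1 := by
  by_cases hx : x ∈ supp E
  · have : deg E x ≤ ((supp E).erase x).card := by
      apply Finset.card_le_card_of_injOn
        (fun e => if h : x ∈ e then Sym2.Mem.other' h else x)
      · intro e he
        simp only [mem_coe, mem_filter] at he ⊢
        rw [dif_pos he.2]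
        have hsp := Sym2.other_spec' he.2
        have hne : Sym2.Mem.other' he.2 ≠ x := by
          intro hh
          have := hnd e he.1
          rw [← hsp, hh, Sym2.mk_isDiag_iff] at this
          exact this rfl
        refine mem_erase.mpr ⟨hne, mem_supp.mpr ⟨e, he.1, ?_⟩⟩
        exact Sym2.other_mem' he.2
      · intro e₁ h₁ e₂ h₂ heq
        simp only [mem_coe, mem_filter] at h₁ h₂
        simp only [dif_pos h₁.2, dif_pos h₂.2] at heq
        rw [← Sym2.other_spec' h₁.2, ← Sym2.other_spec' h₂.2, heq]
    rwa [card_erase_of_mem hx] at this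
  · rw [deg_eq_zero hx]; omega

lemma supp_card_matching {M : Finset (Sym2 V)} (hM : IsMat M) :
    (supp M).card ≤ 2 * M.card := by
  calc (supp M).card = ∑ _x ∈ supp M, 1 := by rw [Finset.sum_const, smul_eq_mul, mul_one]
  _ ≤ ∑ x ∈ supp M, deg M x := by
      apply Finset.sum_le_sum
      intro x hx
      obtain ⟨e, he, hxe⟩ := mem_supp.mp hx
      have : e ∈ M.filter (fun e => x ∈ e) := mem_filter.mpr ⟨he, hxe⟩
      exact card_pos.mpr ⟨e, this⟩
  _ = 2 * M.card := handshake_supp hM.1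

def Vdisj (E₁ E₂ : Finset (Sym2 V)) : Prop := ∀ e₁ ∈ E₁, ∀ e₂ ∈ E₂, Disj e₁ e₂

lemma nu_union {E₁ E₂ : Finset (Sym2 V)} (h : Vdisj E₁ E₂) :
    nu (E₁ ∪ E₂) = nu E₁ + nu E₂ := by
  apply le_antisymm
  · obtain ⟨M, hME, hM, hc⟩ := exists_max_matching (E₁ ∪ E₂)
    rw [← hc]
    have hsplit := card_filter_add_card_filter_not (s := M) (p := fun e => e ∈ E₁)
    have h₁ : M.filter (fun e => e ∈ E₁) ⊆ E₁ := fun e he => (mem_filter.mp he).2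
    have h₂ : M.filter (fun e => ¬ e ∈ E₁) ⊆ E₂ := by
      intro e he
      rw [mem_filter] at he
      rcases mem_union.mp (hME he.1) with h' | h'
      · exact (he.2 h').elim
      · exact h'
    have c₁ := card_le_nu h₁ (hM.subset (filter_subset _ _))
    have c₂ := card_le_nu h₂ (hM.subset (filter_subset _ _))
    omega
  · obtain ⟨M₁, hM₁E, hM₁, hc₁⟩ := exists_max_matching E₁
    obtain ⟨M₂, hM₂E, hM₂, hc₂⟩ := exists_max_matching E₂
    have hdisj : Disjoint M₁ M₂ := by
      rw [Finset.disjoint_left]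
      intro e he₁ he₂
      exact h e (hM₁E he₁) e (hM₂E he₂) e.out.1 ⟨Sym2.out_fst_mem e, Sym2.out_fst_mem e⟩
    have hmat : IsMat (M₁ ∪ M₂) := by
      constructor
      · intro e he
        rcases mem_union.mp he with h' | h'
        · exact hM₁.1 e h'
        · exact hM₂.1 e h'
      · intro e he f hf hef
        rcases mem_union.mp he with h' | h' <;> rcases mem_union.mp hf with h'' | h''
        · exact hM₁.2 e h' f h'' hef
        · exact h e (hM₁E h') f (hM₂E h'')
        · intro x hx
          exact h f (hM₁E h'') e (hM₂E h') x ⟨hx.2, hx.1⟩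
        · exact hM₂.2 e h' f h'' hef
    have := card_le_nu (union_subset_union hM₁E hM₂E) hmat
    rw [card_union_of_disjoint hdisj, hc₁, hc₂] at this
    exact this

def GE (E : Finset (Sym2 V)) : SimpleGraph V := SimpleGraph.fromEdgeSet ↑E

lemma GE_adj {E : Finset (Sym2 V)} {x y : V} : (GE E).Adj x y ↔ s(x, y) ∈ E ∧ x ≠ y := by
  rw [GE, SimpleGraph.fromEdgeSet_adj, mem_coe]

theorem gallai (E : Finset (Sym2 V)) (hnd : ∀ e ∈ E, ¬ e.IsDiag)
    (hconn : ∀ x ∈ supp E, ∀ y ∈ supp E, (GE E).Reachable x y)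
    (hin : ∀ v : V, nu (E.filter (fun e => v ∉ e)) = nu E) :
    (supp E).card ≤ 2 * nu E + 1 := by
  by_contra hbig
  push_neg at hbig
  classical
  set PP : Finset (V × V) := (supp E ×ˢ supp E).filter
    (fun p => p.1 ≠ p.2 ∧ ∃ M, M ⊆ E ∧ IsMat M ∧ M.card = nu E ∧
      ¬ covered M p.1 ∧ ¬ covered M p.2) with hPP
  have hPPne : PP.Nonempty := by
    obtain ⟨M, hME, hM, hMc⟩ := exists_max_matching E
    have h1 : (supp E \ supp M).card ≥ 2 := by
      have h2 : (supp M).card ≤ 2 * nu E := hMc ▸ supp_card_matching hM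
      have h3 := card_sdiff_of_subset (supp_mono hME)
      omega
    obtain ⟨u, hu, v, hv, huv⟩ := Finset.one_lt_card.mp (by omega : 1 < (supp E \ supp M).card)
    rw [mem_sdiff] at hu hv
    refine ⟨(u, v), mem_filter.mpr ⟨mem_product.mpr ⟨hu.1, hv.1⟩, huv, M, hME, hM, hMc, ?_, ?_⟩⟩
    · exact fun hc => hu.2 (mem_supp.mpr hc)
    · exact fun hc => hv.2 (mem_supp.mpr hc)
  obtain ⟨p, hpPP, hmin⟩ := Finset.exists_min_image PP (fun p => (GE E).dist p.1 p.2) hPPne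
  obtain ⟨u, v⟩ := p
  obtain ⟨hprod, huv, M, hME, hM, hMc, hMu, hMv⟩ := mem_filter.mp hpPP
  obtain ⟨hu, hv⟩ := mem_product.mp hprod
  simp only at huv hMu hMv hu hv hmin
  set d := (GE E).dist u v with hd
  have key : ∀ (a b : V), a ∈ supp E → b ∈ supp E → a ≠ b →
      (∃ M', M' ⊆ E ∧ IsMat M' ∧ M'.card = nu E ∧ ¬covered M' a ∧ ¬covered M' b) →
      d ≤ (GE E).dist a b := by
    intro a b ha hb hab hex
    exact hmin (a, b) (mem_filter.mpr ⟨mem_product.mpr ⟨ha, hb⟩, hab, hex⟩)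
  have hreach : (GE E).Reachable u v := hconn u hu v hv
  have hd1 : d ≠ 0 := fun h0 => huv ((SimpleGraph.Reachable.dist_eq_zero_iff hreach).mp h0)
  obtain ⟨pw, hpw⟩ := hreach.exists_walk_length_eq_dist
  cases pw with
  | nil => exact huv rfl
  | cons hadj q =>
    rename_i w
    have hlen : q.length + 1 = d := by
      rw [hd, ← hpw]; simp
    have hwadj : s(u, w) ∈ E ∧ u ≠ w := GE_adj.mp hadj
    have hdu_w : (GE E).dist u w ≤ 1 := by
      have := SimpleGraph.dist_le hadj.toWalk
      simpa using this
    have hdw_v : (GE E).dist w v ≤ d - 1 := by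
      have := SimpleGraph.dist_le q
      omega
    have hwsupp : w ∈ supp E := mem_supp_of_mem hwadj.1 (by simp)
    have hd2 : 2 ≤ d := by
      by_contra h2
      have hq0 : q.length = 0 := by omega
      have hw_v : w = v := q.eq_of_length_eq_zero hq0
      subst hw_v
      have hmat : IsMat (insert s(u, w) M) := by
        refine isMat_insert hM (by rw [Sym2.mk_isDiag_iff]; exact hwadj.2) ?_
        intro t ht
        rw [Sym2.mem_iff] at ht
        rcases ht with rfl | rfl
        · exact hMu
        · exact hMv
      have hcard : (insert s(u, w) M).card = nu E + 1 := by
        rw [card_insert_of_notMem (not_mem_of_uncovered (by simp) hMu), hMc]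
      have := card_le_nu (insert_subset hwadj.1 hME) hmat
      omega
    have hMw : covered M w := by
      by_contra hMw
      have := key u w hu hwsupp hwadj.2 ⟨M, hME, hM, hMc, hMu, hMw⟩
      omega
    obtain ⟨N, hNE', hN, hNc⟩ := exists_max_matching (E.filter (fun e => w ∉ e))
    rw [hin w] at hNc
    have hNE : N ⊆ E := hNE'.trans (filter_subset _ _)
    have hNw : ¬ covered N w := by
      rintro ⟨e, heN, hwe⟩
      exact (mem_filter.mp (hNE' heN)).2 hwe
    have hwnev : w ≠ v := by
      rintro rfl
      omega
    have hNu : covered N u := by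
      by_contra hNu
      have := key u w hu hwsupp hwadj.2 ⟨N, hNE, hN, hNc, hNu, hNw⟩
      omega
    have hNv : covered N v := by
      by_contra hNv
      have := key w v hwsupp hv hwnev ⟨N, hNE, hN, hNc, hNw, hNv⟩
      omega
    rcases exchange M N w hM hN hMw hNw with ⟨N', hN'mat, hN'sub, hN'card⟩ |
      ⟨M', z, hM'mat, hM'sub, hM'card, hNz, hcov⟩
    · have : N'.card ≤ nu E := card_le_nu (hN'sub.trans (union_subset hME hNE)) hN'mat
      omega
    · have hM'E : M' ⊆ E := hM'sub.trans (union_subset hME hNE)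
      have hM'c : M'.card = nu E := by rw [hM'card, hMc]
      have hM'w : ¬ covered M' w := by
        rw [hcov w]
        rintro (⟨-, h⟩ | h)
        · exact h rfl
        · exact hNw (h ▸ hNz)
      by_cases hzu : z = u
      · have hM'v : ¬ covered M' v := by
          rw [hcov v]
          rintro (⟨h, -⟩ | h)
          · exact hMv h
          · exact huv (hzu ▸ h).symm
        have := key w v hwsupp hv hwnev ⟨M', hM'E, hM'mat, hM'c, hM'w, hM'v⟩
        omega
      · have hM'u : ¬ covered M' u := by
          rw [hcov u]
          rintro (⟨h, -⟩ | h)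
          · exact hMu h
          · exact hzu h.symm
        have := key u w hu hwsupp hwadj.2 ⟨M', hM'E, hM'mat, hM'c, hM'u, hM'w⟩
        omega

theorem core (D : ℕ) (E : Finset (Sym2 V)) (hnd : ∀ e ∈ E, ¬ e.IsDiag)
    (hD : ∀ x, deg E x ≤ D) : E.card ≤ (D + 1) * nu E := by
  classical
  by_cases hE : E = ∅
  · subst hE; simp
  obtain ⟨e₀, he₀⟩ := nonempty_iff_ne_empty.mpr hE
  set w₀ := e₀.out.1 with hw₀
  set E₁ := E.filter (fun e => ∃ x ∈ e, (GE E).Reachable w₀ x) with hE₁def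
  set E₂ := E.filter (fun e => ¬ ∃ x ∈ e, (GE E).Reachable w₀ x) with hE₂def
  have hreachboth : ∀ e ∈ E₁, ∀ y ∈ e, (GE E).Reachable w₀ y := by
    intro e he y hy
    obtain ⟨heE, x, hx, hr⟩ := mem_filter.mp he
    by_cases hxy : x = y
    · exact hxy ▸ hr
    · obtain ⟨z, rfl⟩ := Sym2.mem_iff_exists.mp hx
      have hyz : y = z := by
        rcases Sym2.mem_iff.mp hy with h | h
        · exact (hxy h.symm).elim
        · exact h
      subst hyz
      exact hr.trans (SimpleGraph.Adj.reachable (GE_adj.mpr ⟨heE, hxy⟩))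
  by_cases hE₂e : E₂ = ∅
  · -- connected case
    have hEeq : E₁ = E := by
      rw [hE₁def, filter_eq_self]
      intro e he
      by_contra hne
      have : e ∈ E₂ := mem_filter.mpr ⟨he, hne⟩
      rw [hE₂e] at this
      exact notMem_empty e this
    have hconn : ∀ x ∈ supp E, ∀ y ∈ supp E, (GE E).Reachable x y := by
      intro x hx y hy
      obtain ⟨ex, hex, hxex⟩ := mem_supp.mp hx
      obtain ⟨ey, hey, hyey⟩ := mem_supp.mp hy
      have hrx := hreachboth ex (hEeq ▸ hex) x hxex
      have hry := hreachboth ey (hEeq ▸ hey) y hyey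
      exact hrx.symm.trans hry
    by_cases hcase : ∃ v ∈ supp E, nu (E.filter (fun e => v ∉ e)) < nu E
    · -- essential vertex: delete it
      obtain ⟨v, hvs, hlt⟩ := hcase
      set Ev := E.filter (fun e => v ∉ e) with hEv
      have hcards : deg E v + Ev.card = E.card := by
        rw [hEv, deg]
        exact card_filter_add_card_filter_not (p := fun e => v ∈ e)
      have hdegv : 1 ≤ deg E v := by
        obtain ⟨e, he, hve⟩ := mem_supp.mp hvs
        exact card_pos.mpr ⟨e, mem_filter.mpr ⟨he, hve⟩⟩
      have hdecr : Ev.card < E.card := by omega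
      have IH := core D Ev (fun e he => hnd e (filter_subset _ _ he))
        (fun x => le_trans (card_le_card (filter_subset_filter _ (filter_subset _ _))) (hD x))
      have h3 : (D + 1) * nu Ev + (D + 1) ≤ (D + 1) * nu E := by
        have h4 : nu Ev + 1 ≤ nu E := hlt
        calc (D + 1) * nu Ev + (D + 1) = (D + 1) * (nu Ev + 1) := by ring
        _ ≤ (D + 1) * nu E := Nat.mul_le_mul_left _ h4
      have hdv := hD v
      omega
    · -- all vertices inessential: Gallai + counting
      push_neg at hcase
      have hin : ∀ v : V, nu (E.filter (fun e => v ∉ e)) = nu E := by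
        intro v
        by_cases hv : v ∈ supp E
        · exact le_antisymm (nu_mono (filter_subset _ _)) (hcase v hv)
        · have : E.filter (fun e => v ∉ e) = E := by
            rw [filter_eq_self]
            intro e he hve
            exact hv (mem_supp_of_mem he hve)
          rw [this]
      have hgal := gallai E hnd hconn hin
      set n₀ := (supp E).card with hn₀
      have hsum1 : 2 * E.card ≤ n₀ * D := by
        rw [← handshake_supp hnd]
        calc ∑ x ∈ supp E, deg E x ≤ ∑ _x ∈ supp E, D := sum_le_sum (fun x _ => hD x)
        _ = n₀ * D := by rw [sum_const, smul_eq_mul]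
      have hsum2 : 2 * E.card ≤ n₀ * (n₀ - 1) := by
        rw [← handshake_supp hnd]
        calc ∑ x ∈ supp E, deg E x ≤ ∑ _x ∈ supp E, (n₀ - 1) :=
          sum_le_sum (fun x _ => deg_le_supp hnd x)
        _ = n₀ * (n₀ - 1) := by rw [sum_const, smul_eq_mul]
      have hkey : 2 * E.card ≤ (D + 1) * (2 * nu E) := by
        rcases le_or_gt n₀ (D + 1) with hc | hc
        · have h4 : n₀ * (n₀ - 1) ≤ (D + 1) * (n₀ - 1) := Nat.mul_le_mul_right _ hc
          have h5 : (D + 1) * (n₀ - 1) ≤ (D + 1) * (2 * nu E) :=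
            Nat.mul_le_mul_left _ (by omega)
          omega
        · obtain ⟨a, ha⟩ : ∃ a, n₀ = a + 1 := ⟨n₀ - 1, by omega⟩
          have haD : D + 1 ≤ a := by omega
          have h4 : n₀ * D ≤ (D + 1) * a := by
            calc n₀ * D = a * D + D := by rw [ha]; ring
            _ ≤ a * D + a := by omega
            _ = (D + 1) * a := by ring
          have h5 : (D + 1) * a ≤ (D + 1) * (2 * nu E) :=
            Nat.mul_le_mul_left _ (by omega)
          omega
      have : (D + 1) * (2 * nu E) = 2 * ((D + 1) * nu E) := by ring
      omega
  · -- disconnected: split into two vertex-disjoint parts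
    have hE₂ne : E₂.Nonempty := nonempty_iff_ne_empty.mpr hE₂e
    have hE₁mem : e₀ ∈ E₁ :=
      mem_filter.mpr ⟨he₀, ⟨w₀, Sym2.out_fst_mem e₀, SimpleGraph.Reachable.refl w₀⟩⟩
    have hcards : E₁.card + E₂.card = E.card := by
      rw [hE₁def, hE₂def]
      exact card_filter_add_card_filter_not (p := fun e => ∃ x ∈ e, (GE E).Reachable w₀ x)
    have hunion : E₁ ∪ E₂ = E := by
      rw [hE₁def, hE₂def]
      exact filter_union_filter_not_eq _ E
    have hvd : Vdisj E₁ E₂ := by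
      intro e₁ h₁ e₂ h₂ x hx
      have hr : (GE E).Reachable w₀ x := hreachboth e₁ h₁ x hx.1
      exact (mem_filter.mp h₂).2 ⟨x, hx.2, hr⟩
    have h₁lt : E₁.card < E.card := by
      have := card_pos.mpr hE₂ne
      omega
    have h₂lt : E₂.card < E.card := by
      have := card_pos.mpr ⟨e₀, hE₁mem⟩
      omega
    have IH₁ := core D E₁ (fun e he => hnd e (filter_subset _ _ he))
      (fun x => le_trans (card_le_card (filter_subset_filter _ (filter_subset _ _))) (hD x))
    have IH₂ := core D E₂ (fun e he => hnd e (filter_subset _ _ he))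
      (fun x => le_trans (card_le_card (filter_subset_filter _ (filter_subset _ _))) (hD x))
    have hnusum : nu E₁ + nu E₂ = nu E := by
      rw [← nu_union hvd, hunion]
    calc E.card = E₁.card + E₂.card := hcards.symm
    _ ≤ (D + 1) * nu E₁ + (D + 1) * nu E₂ := by omega
    _ = (D + 1) * (nu E₁ + nu E₂) := by ring
    _ = (D + 1) * nu E := by rw [hnusum]
termination_by E.card
decreasing_by
  · exact hdecr
  · exact h₁lt
  · exact h₂lt

end LGR


/-- **Ramsey bound for the class of line graphs (host-graph form), `R_L(i,j) ≤ i·j`.**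
For all positive integers `i` and `j`, every simple undirected graph `H` with at least
`i * j` edges contains either a set of `i` edges that pairwise share an endpoint (a
clique of size `i` in the line graph of `H`) or a matching of size `j` (`j` pairwise
disjoint edges, an independent set of size `j` in the line graph of `H`). -/
theorem line_graph_ramsey_bound {V : Type*} [Fintype V] [DecidableEq V]
    (i j : ℕ) (hi : 0 < i) (hj : 0 < j)
    (H : SimpleGraph V) [DecidableRel H.Adj]
    (hcard : i * j ≤ H.edgeFinset.card) :
    (∃ T ⊆ H.edgeFinset, T.card = i ∧
        ∀ e ∈ T, ∀ f ∈ T, e ≠ f → ∃ x : V, x ∈ e ∧ x ∈ f) ∨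
    (∃ T ⊆ H.edgeFinset, T.card = j ∧
        ∀ e ∈ T, ∀ f ∈ T, e ≠ f → ∀ x : V, ¬(x ∈ e ∧ x ∈ f)) := by
  classical
  set E := H.edgeFinset with hE
  have hnd : ∀ e ∈ E, ¬ e.IsDiag := by
    intro e he
    exact SimpleGraph.not_isDiag_of_mem_edgeSet H (SimpleGraph.mem_edgeFinset.mp he)
  by_cases hstar : ∃ v : V, i ≤ LGR.deg E v
  · left
    obtain ⟨v, hv⟩ := hstar
    obtain ⟨T, hTsub, hTcard⟩ := Finset.exists_subset_card_eq
      (hv : i ≤ (E.filter (fun e => v ∈ e)).card)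
    refine ⟨T, (hTsub.trans (Finset.filter_subset _ _)), hTcard, ?_⟩
    intro e he f hf _
    exact ⟨v, (Finset.mem_filter.mp (hTsub he)).2, (Finset.mem_filter.mp (hTsub hf)).2⟩
  · right
    push_neg at hstar
    have hD : ∀ x, LGR.deg E x ≤ i - 1 := by
      intro x
      have := hstar x
      omega
    have hcore := LGR.core (i - 1) E hnd hD
    have hi1 : i - 1 + 1 = i := by omega
    rw [hi1] at hcore
    have hj' : j ≤ LGR.nu E := by
      by_contra hcon
      push_neg at hcon
      have h2 : LGR.nu E + 1 ≤ j := hcon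
      have : i * (LGR.nu E + 1) ≤ i * j := Nat.mul_le_mul_left _ h2
      have h3 : i * (LGR.nu E + 1) = i * LGR.nu E + i := by ring
      omega
    obtain ⟨M, hME, hM, hMc⟩ := LGR.exists_max_matching E
    obtain ⟨T, hTsub, hTcard⟩ := Finset.exists_subset_card_eq (hMc ▸ hj' : j ≤ M.card)
    refine ⟨T, hTsub.trans hME, hTcard, ?_⟩
    intro e he f hf hne x
    exact hM.2 e (hTsub he) f (hTsub hf) hne x
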